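/- Let n ≥ 2, s ∈ {1, −1}, and let x₁, …, x_{n−1} be real numbers; set x₀ = 0 and define the canonical polynomial map g_n(x) = x + (−1)^{n−1}·sⁿ·x·∏_{i=1}^{n−1}(x − x_i). For each k ∈ {0, …, n−1}, the derivative at the fixed point x_k satisfies g_n′(x_k) = 1 + sⁿ·∏_{i≠k}(x_i − x_k), where the product runs over i ∈ {0, …, n−1} with i ≠ k. Consequently, defining the product distance D_{n,k} = sⁿ·∏_{i≠k}(x_i − x_k): if −2 < D_{n,k} < 0 then x_k is an asymptotically stable fixed point of g_n, whereas if D_{n,k} > 0 or D_{n,k} < −2 then x_k is unstable. -/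

import Mathlib

/-- A fixed point `p` of `f` is stable. -/
def IsStableFP (f : ℝ → ℝ) (p : ℝ) : Prop :=
  ∀ ε > (0:ℝ), ∃ δ > (0:ℝ), ∀ x : ℝ, |x - p| < δ → ∀ n : ℕ, |f^[n] x - p| < ε

/-- A fixed point `p` of `f` is attracting. -/
def IsAttractingFP (f : ℝ → ℝ) (p : ℝ) : Prop :=
  ∃ η > (0:ℝ), ∀ x : ℝ, |x - p| < η →
    Filter.Tendsto (fun n => f^[n] x) Filter.atTop (nhds p)

/-- A fixed point `p` of `f` is asymptotically stable. -/
def IsAsymptoticallyStableFP (f : ℝ → ℝ) (p : ℝ) : Prop :=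
  IsStableFP f p ∧ IsAttractingFP f p

/-- Linear approximation bound from `HasDerivAt`. -/
theorem deriv_approx {g : ℝ → ℝ} {p m : ℝ} (hg : HasDerivAt g m p) {ε : ℝ} (hε : 0 < ε) :
    ∃ δ > (0:ℝ), ∀ x : ℝ, |x - p| < δ → |g x - g p - (x - p) * m| ≤ ε * |x - p| := by
  have hO := hg.isLittleO.def hε
  rw [Metric.eventually_nhds_iff] at hO
  obtain ⟨δ, hδ0, hδ⟩ := hO
  refine ⟨δ, hδ0, fun x hx => ?_⟩
  have h1 := hδ (show dist x p < δ by rwa [Real.dist_eq])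
  simpa [Real.norm_eq_abs, smul_eq_mul] using h1

/-- Contraction: |multiplier| < 1 at a fixed point gives asymptotic stability. -/
theorem key_contract {g : ℝ → ℝ} {p m : ℝ} (hg : HasDerivAt g m p) (hgp : g p = p)
    (hm : |m| < 1) : IsAsymptoticallyStableFP g p := by
  set c : ℝ := (|m| + 1) / 2 with hc
  have hma := abs_nonneg m
  have hc0 : 0 ≤ c := by positivity
  have hmc : |m| < c := by rw [hc]; linarith
  have hc1 : c < 1 := by rw [hc]; linarith
  obtain ⟨δ, hδ0, hδ⟩ := deriv_approx hg (show (0:ℝ) < c - |m| by linarith)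
  have step : ∀ x : ℝ, |x - p| < δ → |g x - p| ≤ c * |x - p| := by
    intro x hx
    have h1 := hδ x hx
    have h2 : g x - p = (g x - g p - (x - p) * m) + (x - p) * m := by rw [hgp]; ring
    calc |g x - p| = |(g x - g p - (x - p) * m) + (x - p) * m| := by rw [h2]
      _ ≤ |g x - g p - (x - p) * m| + |(x - p) * m| := abs_add_le _ _
      _ ≤ (c - |m|) * |x - p| + |x - p| * |m| := by rw [abs_mul]; exact add_le_add h1 le_rfl
      _ = c * |x - p| := by ring
  have iter : ∀ x : ℝ, |x - p| < δ → ∀ n : ℕ, |g^[n] x - p| ≤ c ^ n * |x - p| := by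
    intro x hx n
    induction n with
    | zero => simp
    | succ n ih =>
      have hpow : c ^ n ≤ 1 := pow_le_one₀ hc0 hc1.le
      have hle : c ^ n * |x - p| ≤ |x - p| := by nlinarith [abs_nonneg (x - p)]
      have hin : |g^[n] x - p| < δ := lt_of_le_of_lt (le_trans ih hle) hx
      rw [Function.iterate_succ_apply']
      calc |g (g^[n] x) - p| ≤ c * |g^[n] x - p| := step _ hin
        _ ≤ c * (c ^ n * |x - p|) := by nlinarith
        _ = c ^ (n + 1) * |x - p| := by ring
  constructor
  · intro ε hε'
    refine ⟨min δ ε, lt_min hδ0 hε', fun x hx n => ?_⟩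
    have hxδ : |x - p| < δ := lt_of_lt_of_le hx (min_le_left _ _)
    have hpow : c ^ n ≤ 1 := pow_le_one₀ hc0 hc1.le
    calc |g^[n] x - p| ≤ c ^ n * |x - p| := iter x hxδ n
      _ ≤ |x - p| := by nlinarith [abs_nonneg (x - p)]
      _ < ε := lt_of_lt_of_le hx (min_le_right _ _)
  · refine ⟨δ, hδ0, fun x hx => ?_⟩
    rw [tendsto_iff_dist_tendsto_zero]
    have h0 : Filter.Tendsto (fun n : ℕ => c ^ n * |x - p|) Filter.atTop (nhds 0) := by
      simpa using (tendsto_pow_atTop_nhds_zero_of_lt_one hc0 hc1).mul_const |x - p|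
    refine squeeze_zero (fun n => dist_nonneg) (fun n => ?_) h0
    rw [Real.dist_eq]; exact iter x hx n

/-- Expansion: |multiplier| > 1 at a fixed point gives instability. -/
theorem key_expand {g : ℝ → ℝ} {p m : ℝ} (hg : HasDerivAt g m p) (hgp : g p = p)
    (hm : 1 < |m|) : ¬ IsStableFP g p := by
  set c : ℝ := (|m| + 1) / 2 with hc
  have hc1 : 1 < c := by rw [hc]; linarith
  have hmc : c < |m| := by rw [hc]; linarith
  obtain ⟨δ, hδ0, hδ⟩ := deriv_approx hg (show (0:ℝ) < |m| - c by linarith)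
  have step : ∀ x : ℝ, |x - p| < δ → c * |x - p| ≤ |g x - p| := by
    intro x hx
    have h1 := hδ x hx
    have t1 : |(x - p) * m| ≤ |g x - g p| + |g x - g p - (x - p) * m| := by
      have h2 := abs_add_le (g x - g p) ((x - p) * m - (g x - g p))
      rw [show (g x - g p) + ((x - p) * m - (g x - g p)) = (x - p) * m by ring,
        abs_sub_comm ((x - p) * m) (g x - g p)] at h2
      exact h2
    have t2 : |(x - p) * m| = |x - p| * |m| := abs_mul _ _
    have t3 : |g x - g p| = |g x - p| := by rw [hgp]
    nlinarith [abs_nonneg (x - p)]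
  intro hstab
  obtain ⟨δ', hδ'0, hδ'⟩ := hstab δ hδ0
  set x : ℝ := p + min δ' δ / 2 with hxdef
  have hmin0 : 0 < min δ' δ := lt_min hδ'0 hδ0
  have hxp : |x - p| = min δ' δ / 2 := by
    rw [hxdef]; rw [show p + min δ' δ / 2 - p = min δ' δ / 2 by ring]
    exact abs_of_pos (by linarith)
  have hxpos : 0 < |x - p| := by rw [hxp]; linarith
  have hxδ' : |x - p| < δ' := by rw [hxp]; have := min_le_left δ' δ; linarith
  have hb : ∀ n : ℕ, |g^[n] x - p| < δ := hδ' x hxδ'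
  have iter : ∀ n : ℕ, c ^ n * |x - p| ≤ |g^[n] x - p| := by
    intro n
    induction n with
    | zero => simp
    | succ n ih =>
      rw [Function.iterate_succ_apply']
      have hcpos : (0:ℝ) < c := by linarith
      calc c ^ (n + 1) * |x - p| = c * (c ^ n * |x - p|) := by ring
        _ ≤ c * |g^[n] x - p| := by nlinarith
        _ ≤ |g (g^[n] x) - p| := step _ (hb n)
  obtain ⟨N, hN⟩ := pow_unbounded_of_one_lt (δ / |x - p|) hc1
  have : δ < c ^ N * |x - p| := by
    rw [div_lt_iff₀ hxpos] at hN; linarith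
  exact absurd (lt_of_le_of_lt (iter N) (hb N)) (by linarith)

/-- multiplier and stability of the fixed points of the
canonical polynomial map of degree `n` via the product distance function. -/
theorem stmt_18 (n : ℕ) (hn : 2 ≤ n) (s : ℝ) (hs : s = 1 ∨ s = -1)
    (X : ℕ → ℝ) (hX0 : X 0 = 0) (k : ℕ) (hk : k < n) :
    let g : ℝ → ℝ := fun x =>
      x + (-1) ^ (n - 1) * s ^ n * x * ∏ i ∈ Finset.Ico 1 n, (x - X i)
    let D : ℝ := s ^ n * ∏ i ∈ (Finset.range n).erase k, (X i - X k)
    deriv g (X k) = 1 + D ∧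
    (-2 < D → D < 0 → IsAsymptoticallyStableFP g (X k)) ∧
    (0 < D ∨ D < -2 → ¬ IsStableFP g (X k)) := by
  intro g D
  set C : ℝ := (-1) ^ (n - 1) * s ^ n with hC
  have hn0 : 0 < n := by omega
  have hkr : k ∈ Finset.range n := Finset.mem_range.mpr hk
  -- rewrite g using the full product over range n
  have hgeq : ∀ x : ℝ, g x = x + C * ∏ i ∈ Finset.range n, (x - X i) := by
    intro x
    have : ∏ i ∈ Finset.range n, (x - X i)
        = (x - X 0) * ∏ i ∈ Finset.Ico 1 n, (x - X i) := by
      rw [Finset.range_eq_Ico, Finset.prod_eq_prod_Ico_succ_bot hn0]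
    simp only [g, this, hX0, sub_zero, hC]; ring
  -- fixed point
  have hfix : g (X k) = X k := by
    rw [hgeq]
    have : ∏ i ∈ Finset.range n, (X k - X i) = 0 :=
      Finset.prod_eq_zero hkr (by ring)
    rw [this]; ring
  -- derivative of the product
  have hprod : HasDerivAt (fun x => ∏ i ∈ Finset.range n, (x - X i))
      (∏ j ∈ (Finset.range n).erase k, (X k - X j)) (X k) := by
    have h := HasDerivAt.finset_prod (u := Finset.range n)
      (f := fun i x => x - X i) (f' := fun _ => (1:ℝ)) (x := X k)
      (fun i _ => (hasDerivAt_id (X k)).sub_const (X i))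
    have hsum : (∑ i ∈ Finset.range n,
        (∏ j ∈ (Finset.range n).erase i, (X k - X j)) • (1:ℝ))
        = ∏ j ∈ (Finset.range n).erase k, (X k - X j) := by
      rw [Finset.sum_eq_single k]
      · simp
      · intro i hi hik
        have hkmem : k ∈ (Finset.range n).erase i :=
          Finset.mem_erase.mpr ⟨fun h => hik h.symm, hkr⟩
        rw [Finset.prod_eq_zero hkmem (by ring)]; simp
      · intro h; exact absurd hkr h
    rw [hsum] at h
    have e : (∏ i ∈ Finset.range n, fun x : ℝ => x - X i) = fun x => ∏ i ∈ Finset.range n, (x - X i) := by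
      ext x; simp [Finset.prod_apply]
    rw [e] at h
    exact h
  have hg' : HasDerivAt g (1 + D) (X k) := by
    have h := ((hasDerivAt_id (X k)).add ((hprod.const_mul C)))
    have hD : 1 + C * ∏ j ∈ (Finset.range n).erase k, (X k - X j) = 1 + D := by
      have hcard : ((Finset.range n).erase k).card = n - 1 := by
        rw [Finset.card_erase_of_mem hkr, Finset.card_range]
      have hneg : ∏ j ∈ (Finset.range n).erase k, (X k - X j)
          = (-1) ^ (n - 1) * ∏ j ∈ (Finset.range n).erase k, (X j - X k) := by
        rw [← hcard]
        calc ∏ j ∈ (Finset.range n).erase k, (X k - X j)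
            = ∏ j ∈ (Finset.range n).erase k, ((-1) * (X j - X k)) :=
              Finset.prod_congr rfl (fun j _ => by ring)
          _ = (-1) ^ ((Finset.range n).erase k).card
                * ∏ j ∈ (Finset.range n).erase k, (X j - X k) := by
              rw [Finset.prod_mul_distrib, Finset.prod_const]
      rw [hneg, hC]
      have hsq : ((-1:ℝ) ^ (n - 1)) * ((-1:ℝ) ^ (n - 1)) = 1 := by
        rw [← pow_add]; exact Even.neg_one_pow ⟨n - 1, rfl⟩
      simp only [D]
      linear_combination (s ^ n * ∏ j ∈ (Finset.range n).erase k, (X j - X k)) * hsq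
    rw [← hD]
    have : HasDerivAt g (1 + C * ∏ j ∈ (Finset.range n).erase k, (X k - X j)) (X k) := by
      have hgfun : g = fun x => x + C * ∏ i ∈ Finset.range n, (x - X i) := funext hgeq
      rw [hgfun]
      exact h
    exact this
  refine ⟨hg'.deriv, ?_, ?_⟩
  · intro h1 h2
    exact key_contract hg' hfix (abs_lt.mpr ⟨by linarith, by linarith⟩)
  · intro h
    refine key_expand hg' hfix ?_
    rcases h with h | h
    · rw [abs_of_pos (by linarith)]; linarith
    · rw [abs_of_neg (by linarith)]; linarith
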